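/- Let G ≥ 2 be an integer. Then Σ_{u=1}^{∞} 2/(u^{2G-1}·(u+1)^{2G-1}) = 2·Σ_{j=1}^{2G-1} C(4G-j-3, 2G-j-1) - 4·Σ_{j=1}^{G-1} C(4G-2j-3, 2G-2j-1)·ζ(2j), where ζ(2j) = Σ_{n≥1} n^{-2j} and C(·,·) is the binomial coefficient. -/

import Mathlib

open Finset Filter



lemma sumX (A B : ℕ) (x : ℝ) :
    ∑ k ∈ range (A+1), (-1:ℝ)^k * ((B+k).choose k : ℝ) / x ^ (A+1-k) =
      ∑ k ∈ range (A+1), (-1:ℝ)^k * ((B+k-1).choose k : ℝ) / x ^ (A+1-k) -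
      ∑ k ∈ range A, (-1:ℝ)^k * ((B+k).choose k : ℝ) / x ^ (A-k) := by
  rw [Finset.sum_range_succ' (fun k => (-1:ℝ)^k * ((B+k).choose k : ℝ) / x ^ (A+1-k)),
      Finset.sum_range_succ' (fun k => (-1:ℝ)^k * ((B+k-1).choose k : ℝ) / x ^ (A+1-k))]
  have h0 : ((B+0-1).choose 0 : ℝ) = ((B+0).choose 0 : ℝ) := by simp
  rw [h0]
  have hterm : ∑ k ∈ range A, (-1:ℝ)^(k+1) * ((B+(k+1)).choose (k+1) : ℝ) / x ^ (A+1-(k+1)) =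
      ∑ k ∈ range A, (-1:ℝ)^(k+1) * ((B+(k+1)-1).choose (k+1) : ℝ) / x ^ (A+1-(k+1)) -
      ∑ k ∈ range A, (-1:ℝ)^k * ((B+k).choose k : ℝ) / x ^ (A-k) := by
    rw [← Finset.sum_sub_distrib]
    apply Finset.sum_congr rfl
    intro k hk
    have he : A + 1 - (k+1) = A - k := by omega
    have hc : (B + (k+1)).choose (k+1) = (B+k).choose k + (B+k).choose (k+1) := by
      have h : B + (k+1) = (B+k) + 1 := by omega
      rw [h, Nat.choose_succ_succ]
    have hc2 : B + (k+1) - 1 = B + k := by omega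
    rw [he, hc, hc2]
    push_cast
    ring
  linear_combination hterm

lemma sumY (A B : ℕ) (y : ℝ) :
    ∑ k ∈ range (B+1), ((A+k).choose k : ℝ) / y ^ (B+1-k) =
      ∑ k ∈ range B, ((A+k).choose k : ℝ) / y ^ (B-k) +
      ∑ k ∈ range (B+1), ((A+k-1).choose k : ℝ) / y ^ (B+1-k) := by
  rw [Finset.sum_range_succ' (fun k => ((A+k).choose k : ℝ) / y ^ (B+1-k)),
      Finset.sum_range_succ' (fun k => ((A+k-1).choose k : ℝ) / y ^ (B+1-k))]
  have h0 : ((A+0-1).choose 0 : ℝ) = ((A+0).choose 0 : ℝ) := by simp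
  rw [h0]
  have hterm : ∑ k ∈ range B, ((A+(k+1)).choose (k+1) : ℝ) / y ^ (B+1-(k+1)) =
      ∑ k ∈ range B, ((A+(k+1)-1).choose (k+1) : ℝ) / y ^ (B+1-(k+1)) +
      ∑ k ∈ range B, ((A+k).choose k : ℝ) / y ^ (B-k) := by
    rw [← Finset.sum_add_distrib]
    apply Finset.sum_congr rfl
    intro k hk
    have he : B + 1 - (k+1) = B - k := by omega
    have hc : (A + (k+1)).choose (k+1) = (A+k).choose k + (A+k).choose (k+1) := by
      have h : A + (k+1) = (A+k) + 1 := by omega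
      rw [h, Nat.choose_succ_succ]
    have hc2 : A + (k+1) - 1 = A + k := by omega
    rw [he, hc, hc2]
    push_cast
    ring
  linear_combination hterm

lemma PF : ∀ (a b : ℕ), a + b ≠ 0 → ∀ x : ℝ, 0 < x →
    1 / (x ^ a * (x+1) ^ b) =
      (∑ k ∈ range a, (-1:ℝ)^k * ((b+k-1).choose k : ℝ) / x ^ (a-k)) +
      (-1:ℝ)^a * ∑ k ∈ range b, ((a+k-1).choose k : ℝ) / (x+1) ^ (b-k) := by
  intro a
  induction a with
  | zero =>
    intro b hb x hx
    simp only [pow_zero, one_mul, range_zero, sum_empty, zero_add]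
    rw [Finset.sum_eq_single 0]
    · have : b - 0 = b := by omega
      simp [this]
    · intro k hk hk0
      have h : (k - 1).choose k = 0 := Nat.choose_eq_zero_of_lt (by omega)
      simp [h]
    · intro h
      simp at h
      omega
  | succ A ihA =>
    intro b
    induction b with
    | zero =>
      intro _ x hx
      simp only [pow_zero, mul_one, range_zero, sum_empty, mul_zero, add_zero]
      rw [Finset.sum_eq_single 0]
      · simp
      · intro k hk hk0
        have h : (0 + k - 1).choose k = 0 := Nat.choose_eq_zero_of_lt (by omega)
        simpa using Or.inl (by simpa using h)
      · simp
    | succ B ihB =>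
      intro _ x hx
      have hx0 : x ≠ 0 := ne_of_gt hx
      have hx1 : x + 1 ≠ 0 := by positivity
      have key : 1 / (x ^ (A+1) * (x+1) ^ (B+1)) =
          1 / (x ^ (A+1) * (x+1) ^ B) - 1 / (x ^ A * (x+1) ^ (B+1)) := by
        field_simp
        ring
      rw [key, ihB (by omega) x hx, ihA (B+1) (by omega) x hx]
      have e1 : ∀ k, B + 1 + k - 1 = B + k := by intro k; omega
      have e2 : ∀ k, A + 1 + k - 1 = A + k := by intro k; omega
      simp only [e1, e2]
      have hX := sumX A B x
      have hY := sumY A B (x+1)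
      have hsgn : (-1:ℝ)^(A+1) = -(-1:ℝ)^A := by ring
      rw [hsgn]
      linear_combination -hX + ((-1:ℝ)^A) * hY



noncomputable def Z (p : ℕ) : ℝ := ∑' n : ℕ, 1 / ((n:ℝ)+1) ^ p

lemma summableZ {p : ℕ} (hp : 2 ≤ p) : Summable (fun n : ℕ => 1 / ((n:ℝ)+1) ^ p) := by
  have h : Summable (fun n : ℕ => 1 / (n:ℝ) ^ p) := (Real.summable_one_div_nat_pow).mpr hp
  have := (summable_nat_add_iff 1).mpr h
  refine this.congr fun n => ?_
  push_cast
  ring_nf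

lemma hasSumZ {p : ℕ} (hp : 2 ≤ p) : HasSum (fun n : ℕ => 1 / ((n:ℝ)+1) ^ p) (Z p) :=
  (summableZ hp).hasSum

lemma hasSumZ' {p : ℕ} (hp : 2 ≤ p) : HasSum (fun n : ℕ => 1 / ((n:ℝ)+2) ^ p) (Z p - 1) := by
  have h : HasSum (fun n : ℕ => 1 / ((n:ℝ)+1) ^ p) ((Z p - 1) + ∑ i ∈ Finset.range 1, 1 / ((i:ℝ)+1) ^ p) := by
    have : (Z p - 1) + ∑ i ∈ Finset.range 1, 1 / ((i:ℝ)+1) ^ p = Z p := by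
      simp
    rw [this]
    exact hasSumZ hp
  have h2 := (hasSum_nat_add_iff (f := fun n : ℕ => 1 / ((n:ℝ)+1) ^ p) 1).mpr h
  refine h2.congr_fun fun n => ?_
  push_cast
  ring_nf

lemma telescope : HasSum (fun n : ℕ => 1 / ((n:ℝ)+1) - 1 / ((n:ℝ)+2)) 1 := by
  have hsum : Summable (fun n : ℕ => 1 / ((n:ℝ)+1) - 1 / ((n:ℝ)+2)) := by
    have h2 : Summable (fun n : ℕ => 1 / ((n:ℝ)+1) ^ 2) := summableZ le_rfl
    refine Summable.of_nonneg_of_le (fun n => ?_) (fun n => ?_) h2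
    · have h1 : (0:ℝ) < (n:ℝ)+1 := by positivity
      have h2' : (0:ℝ) < (n:ℝ)+2 := by positivity
      rw [sub_nonneg, div_le_div_iff₀ h2' h1]
      nlinarith
    · have h1 : (0:ℝ) < (n:ℝ)+1 := by positivity
      have h2' : (0:ℝ) < (n:ℝ)+2 := by positivity
      rw [div_sub_div _ _ (ne_of_gt h1) (ne_of_gt h2')]
      rw [div_le_div_iff₀ (by positivity) (by positivity)]
      nlinarith
  rw [hsum.hasSum_iff_tendsto_nat]
  have key : ∀ n : ℕ, ∑ i ∈ range n, (1 / ((i:ℝ)+1) - 1 / ((i:ℝ)+2)) = 1 - 1/((n:ℝ)+1) := by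
    intro n
    have := Finset.sum_range_sub' (f := fun i : ℕ => 1 / ((i:ℝ)+1)) n
    rw [show ∑ i ∈ range n, (1 / ((i:ℝ)+1) - 1 / ((i:ℝ)+2)) =
      ∑ i ∈ range n, (1/((i:ℝ)+1) - 1/(((i+1:ℕ):ℝ)+1)) from Finset.sum_congr rfl
        (fun i _ => by push_cast; ring_nf), this]
    norm_num
  simp only [key]
  have : Tendsto (fun n : ℕ => 1/((n:ℝ)+1)) atTop (nhds 0) := tendsto_one_div_add_atTop_nhds_zero_nat
  have h := (tendsto_const_nhds (x := (1:ℝ))).sub this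
  simpa using h

lemma key (M : ℕ) (hM : Even M) (h2 : 2 ≤ M) :
    HasSum (fun u : ℕ => 1 / (((u:ℝ)+1) ^ (M+1) * ((u:ℝ)+2) ^ (M+1)))
      (((2*M).choose M : ℝ) +
        ∑ k ∈ range M, ((-1:ℝ)^k * ((M+k).choose k : ℝ) * Z (M+1-k)
          - ((M+k).choose k : ℝ) * (Z (M+1-k) - 1))) := by
  have ht : HasSum (fun u : ℕ => ((2*M).choose M : ℝ) * (1 / ((u:ℝ)+1) - 1 / ((u:ℝ)+2)))
      (((2*M).choose M : ℝ) * 1) := telescope.mul_left _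
  have hh : ∀ k ∈ range M,
      HasSum (fun u : ℕ => (-1:ℝ)^k * ((M+k).choose k : ℝ) * (1 / ((u:ℝ)+1) ^ (M+1-k))
          - ((M+k).choose k : ℝ) * (1 / ((u:ℝ)+2) ^ (M+1-k)))
        ((-1:ℝ)^k * ((M+k).choose k : ℝ) * Z (M+1-k)
          - ((M+k).choose k : ℝ) * (Z (M+1-k) - 1)) := by
    intro k hk
    simp only [mem_range] at hk
    have hp : 2 ≤ M + 1 - k := by omega
    exact ((hasSumZ hp).mul_left _).sub ((hasSumZ' hp).mul_left _)
  have hsum := hasSum_sum hh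
  have htotal := ht.add hsum
  rw [mul_one] at htotal
  refine htotal.congr_fun fun u => ?_
  have hx : (0:ℝ) < (u:ℝ)+1 := by positivity
  have hpf := PF (M+1) (M+1) (by omega) ((u:ℝ)+1) hx
  have hxx : ((u:ℝ)+1)+1 = (u:ℝ)+2 := by ring
  rw [hxx] at hpf
  rw [hpf]
  have e1 : ∀ k, M + 1 + k - 1 = M + k := by intro k; omega
  simp only [e1]
  rw [Finset.sum_range_succ, Finset.sum_range_succ
        (f := fun k => ((M+k).choose k : ℝ) / ((u:ℝ)+2) ^ (M+1-k))]
  have hsgn : (-1:ℝ)^(M+1) = -1 := by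
    rw [pow_succ, hM.neg_one_pow, one_mul]
  rw [hsgn]
  have hMM : M + M = 2 * M := by omega
  have hexp : M + 1 - M = 1 := by omega
  rw [hMM, hexp, Finset.sum_sub_distrib]
  have hcongr1 : ∀ k ∈ range M,
      (-1:ℝ)^k * ((M+k).choose k : ℝ) * (1 / ((u:ℝ)+1) ^ (M+1-k)) =
      (-1:ℝ)^k * ((M+k).choose k : ℝ) / ((u:ℝ)+1) ^ (M+1-k) := by
    intro k _; ring
  have hcongr2 : ∀ k ∈ range M,
      ((M+k).choose k : ℝ) * (1 / ((u:ℝ)+2) ^ (M+1-k)) =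
      ((M+k).choose k : ℝ) / ((u:ℝ)+2) ^ (M+1-k) := by
    intro k _; ring
  rw [Finset.sum_congr rfl hcongr1, Finset.sum_congr rfl hcongr2]
  have hsgnM : (-1:ℝ)^M = 1 := hM.neg_one_pow
  rw [hsgnM]
  ring

theorem equal_genus_integral (G : ℕ) (hG : 2 ≤ G) :
    ∑' u : ℕ, (2 : ℝ) / ((u + 1) ^ (2 * G - 1) * (u + 2) ^ (2 * G - 1)) =
      2 * (∑ j ∈ Finset.Icc 1 (2 * G - 1),
            ((4 * G - j - 3).choose (2 * G - j - 1) : ℝ)) -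
        4 * ∑ j ∈ Finset.Icc 1 (G - 1),
            ((4 * G - 2 * j - 3).choose (2 * G - 2 * j - 1) : ℝ) *
              ∑' n : ℕ, (1 : ℝ) / (n + 1) ^ (2 * j) := by
  set M : ℕ := 2 * G - 2 with hMdef
  have hMeven : Even M := by refine ⟨G - 1, by omega⟩
  have hM2 : 2 ≤ M := by omega
  have hexp : 2 * G - 1 = M + 1 := by omega
  have hkey := key M hMeven hM2
  -- LHS
  have hL : ∑' u : ℕ, (2 : ℝ) / (((u:ℝ) + 1) ^ (2 * G - 1) * ((u:ℝ) + 2) ^ (2 * G - 1)) =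
      2 * (((2*M).choose M : ℝ) +
        ∑ k ∈ range M, ((-1:ℝ)^k * ((M+k).choose k : ℝ) * Z (M+1-k)
          - ((M+k).choose k : ℝ) * (Z (M+1-k) - 1))) := by
    rw [hexp, ← hkey.tsum_eq, ← tsum_mul_left]
    exact tsum_congr fun u => by ring
  rw [hL]
  -- RHS first sum
  have hS1 : ∑ j ∈ Finset.Icc 1 (2 * G - 1), ((4 * G - j - 3).choose (2 * G - j - 1) : ℝ) =
      (∑ k ∈ range M, ((M+k).choose k : ℝ)) + ((2*M).choose M : ℝ) := by
    rw [show ((2*M).choose M : ℝ) = ((M+M).choose M : ℝ) by rw [two_mul],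
        ← Finset.sum_range_succ (f := fun k => ((M+k).choose k : ℝ))]
    apply Finset.sum_nbij' (i := fun j => M + 1 - j) (j := fun k => M + 1 - k)
    · intro j hj; simp only [mem_Icc] at hj; simp only [mem_range]; omega
    · intro k hk; simp only [mem_range] at hk; simp only [mem_Icc]; omega
    · intro j hj; simp only [mem_Icc] at hj; omega
    · intro k hk; simp only [mem_range] at hk; omega
    · intro j hj
      simp only [mem_Icc] at hj
      have e1 : M + (M + 1 - j) = 4 * G - j - 3 := by omega
      have e2 : M + 1 - j = 2 * G - j - 1 := by omega
      rw [e1, e2]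
  -- zeta terms
  have hZ : ∀ j : ℕ, (∑' n : ℕ, (1 : ℝ) / ((n:ℝ) + 1) ^ (2 * j)) = Z (2 * j) :=
    fun j => rfl
  simp only [hZ]
  -- second sum reindex
  have hS2 : ∑ k ∈ range M, (((-1:ℝ)^k - 1) * (((M+k).choose k : ℝ) * Z (M+1-k))) =
      -2 * ∑ j ∈ Finset.Icc 1 (G - 1),
        ((4 * G - 2 * j - 3).choose (2 * G - 2 * j - 1) : ℝ) * Z (2 * j) := by
    rw [← Finset.sum_filter_of_ne (p := fun k => Odd k)
      (by intro k hk hne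
          by_contra hodd
          apply hne
          rw [Nat.not_odd_iff_even] at hodd
          rw [hodd.neg_one_pow]
          ring)]
    rw [Finset.sum_congr rfl (g := fun k => (-2) * (((M+k).choose k : ℝ) * Z (M+1-k)))
      (by intro k hk
          simp only [mem_filter] at hk
          rw [hk.2.neg_one_pow]
          ring)]
    rw [← Finset.mul_sum]
    congr 1
    apply Finset.sum_nbij' (i := fun k => (M + 1 - k) / 2) (j := fun j => M + 1 - 2 * j)
    · intro k hk
      simp only [mem_filter, mem_range, Nat.odd_iff] at hk
      simp only [mem_Icc]
      omega
    · intro j hj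
      simp only [mem_Icc] at hj
      simp only [mem_filter, mem_range, Nat.odd_iff]
      omega
    · intro k hk
      simp only [mem_filter, mem_range, Nat.odd_iff] at hk
      omega
    · intro j hj
      simp only [mem_Icc] at hj
      omega
    · intro k hk
      simp only [mem_filter, mem_range, Nat.odd_iff] at hk
      have e1 : 4 * G - 2 * ((M + 1 - k) / 2) - 3 = M + k := by omega
      have e2 : 2 * G - 2 * ((M + 1 - k) / 2) - 1 = k := by omega
      have e3 : 2 * ((M + 1 - k) / 2) = M + 1 - k := by omega
      rw [e1, e2, e3]
  rw [hS1]
  -- middle algebra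
  have hmid : ∑ k ∈ range M, ((-1:ℝ)^k * ((M+k).choose k : ℝ) * Z (M+1-k)
        - ((M+k).choose k : ℝ) * (Z (M+1-k) - 1)) =
      (∑ k ∈ range M, ((M+k).choose k : ℝ)) +
      ∑ k ∈ range M, (((-1:ℝ)^k - 1) * (((M+k).choose k : ℝ) * Z (M+1-k))) := by
    rw [← Finset.sum_add_distrib]
    apply Finset.sum_congr rfl
    intro k _
    ring
  rw [hmid, hS2]
  ring
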